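/- Let ϱ : [0,∞) → [0,∞) be continuous and nondecreasing with ϱ(r) > 0 for all r > 0 and ∫_0^1 dr/ϱ(r) = ∞ (the Lebesgue integral over (0,1] of 1/ϱ diverges). Let T > 0, κ ≥ 0, and let u : [0,T] → [0,∞) be continuous with u(t) ≤ κ·∫_0^t ϱ(u(s)) ds for every t ∈ [0,T]. Then u(t) = 0 for all t ∈ [0,T]. -/

import Mathlib

open MeasureTheory intervalIntegral

theorem stmt_12 (ϱ : ℝ → ℝ) (hϱc : ContinuousOn ϱ (Set.Ici 0))
    (hϱm : MonotoneOn ϱ (Set.Ici 0)) (hϱnn : ∀ r : ℝ, 0 ≤ r → 0 ≤ ϱ r)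
    (hϱpos : ∀ r : ℝ, 0 < r → 0 < ϱ r)
    (hdiv : (∫⁻ r in Set.Ioc (0:ℝ) 1, ENNReal.ofReal (1 / ϱ r)) = ⊤)
    (T κ : ℝ) (hT : 0 < T) (hκ : 0 ≤ κ)
    (u : ℝ → ℝ) (hu : ContinuousOn u (Set.Icc 0 T))
    (hunn : ∀ t ∈ Set.Icc (0:ℝ) T, 0 ≤ u t)
    (hineq : ∀ t ∈ Set.Icc (0:ℝ) T, u t ≤ κ * ∫ s in (0:ℝ)..t, ϱ (u s)) :
    ∀ t ∈ Set.Icc (0:ℝ) T, u t = 0 := by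
  classical
  -- extended versions of ϱ and u, continuous on all of ℝ
  set ϱb : ℝ → ℝ := fun r => ϱ (max r 0) with hϱb_def
  set ub : ℝ → ℝ := fun t => u (min (max t 0) T) with hub_def
  have hϱbc : Continuous ϱb :=
    hϱc.comp_continuous (continuous_id.max continuous_const) fun x => le_max_right x 0
  have hmem : ∀ t : ℝ, min (max t 0) T ∈ Set.Icc (0:ℝ) T := by
    intro t
    exact ⟨le_min (le_max_right t 0) hT.le, min_le_right _ _⟩
  have hubc : Continuous ub :=
    hu.comp_continuous ((continuous_id.max continuous_const).min continuous_const) hmem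
  have hub_eq : ∀ t ∈ Set.Icc (0:ℝ) T, ub t = u t := by
    intro t ht
    simp only [hub_def]
    rw [max_eq_left ht.1, min_eq_left ht.2]
  have hϱb_eq : ∀ r : ℝ, 0 ≤ r → ϱb r = ϱ r := by
    intro r hr; simp only [hϱb_def]; rw [max_eq_left hr]
  have hϱb_nonneg : ∀ r : ℝ, 0 ≤ ϱb r := fun r => hϱnn _ (le_max_right _ _)
  have hϱb_mono : Monotone ϱb := fun a b h =>
    hϱm (le_max_right a 0) (le_max_right b 0) (max_le_max h le_rfl)
  have hϱb_pos : ∀ r : ℝ, 0 < r → 0 < ϱb r := by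
    intro r hr
    simp only [hϱb_def]
    rw [max_eq_left hr.le]
    exact hϱpos r hr
  -- the dominating function v
  set v : ℝ → ℝ := fun t => κ * ∫ s in (0:ℝ)..t, ϱb (ub s) with hv_def
  have hcont_int : Continuous fun s => ϱb (ub s) := hϱbc.comp hubc
  have hv_deriv : ∀ t : ℝ, HasDerivAt v (κ * ϱb (ub t)) t := fun t =>
    HasDerivAt.const_mul κ ((hcont_int.integral_hasStrictDerivAt 0 t).hasDerivAt)
  have hv_cont : Continuous v := by
    rw [continuous_iff_continuousAt]; exact fun t => (hv_deriv t).continuousAt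
  have hv_mono : Monotone v := by
    intro a b hab
    have hsplit := integral_add_adjacent_intervals
      (hcont_int.intervalIntegrable (μ := volume) 0 a) (hcont_int.intervalIntegrable (μ := volume) a b)
    have hnn : 0 ≤ ∫ s in a..b, ϱb (ub s) :=
      intervalIntegral.integral_nonneg hab fun s _ => hϱb_nonneg (ub s)
    simp only [hv_def]
    nlinarith [hsplit]
  have hv0 : v 0 = 0 := by simp [hv_def]
  -- translate the hypothesis inequality
  have hint_eq : ∀ t ∈ Set.Icc (0:ℝ) T,
      (∫ s in (0:ℝ)..t, ϱ (u s)) = ∫ s in (0:ℝ)..t, ϱb (ub s) := by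
    intro t ht
    apply intervalIntegral.integral_congr
    intro s hs
    rw [Set.uIcc_of_le ht.1] at hs
    have hsT : s ∈ Set.Icc (0:ℝ) T := ⟨hs.1, hs.2.trans ht.2⟩
    show ϱ (u s) = ϱb (ub s)
    rw [hub_eq s hsT, hϱb_eq _ (hunn s hsT)]
  have hineq' : ∀ t ∈ Set.Icc (0:ℝ) T, u t ≤ v t := by
    intro t ht
    have := hineq t ht
    rw [hint_eq t ht] at this
    exact this
  -- main claim: v vanishes on [0, T]
  suffices hveq : ∀ t ∈ Set.Icc (0:ℝ) T, v t ≤ 0 by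
    intro t ht
    have h1 := hineq' t ht
    have h2 := hunn t ht
    have h3 := hveq t ht
    linarith
  by_contra hcon
  push_neg at hcon
  obtain ⟨t₁, ht₁, hc⟩ := hcon
  set c : ℝ := v t₁ with hc_def
  set c' : ℝ := min c 1 with hc'_def
  have hc'pos : 0 < c' := lt_min hc one_pos
  have hc'le1 : c' ≤ 1 := min_le_right _ _
  have hc'lec : c' ≤ c := min_le_left _ _
  -- the constant K
  set K : ℝ := ∫ r in c'..(1:ℝ), (ϱb r)⁻¹ with hK_def
  have hinv_cont : ∀ a : ℝ, 0 < a → ContinuousOn (fun r => (ϱb r)⁻¹) (Set.Ici a) := by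
    intro a ha
    exact ContinuousOn.inv₀ hϱbc.continuousOn fun r hr => (hϱb_pos r (lt_of_lt_of_le ha hr)).ne'
  have hK_nonneg : 0 ≤ K :=
    intervalIntegral.integral_nonneg hc'le1 fun r _ => inv_nonneg.2 (hϱb_nonneg r)
  -- divergence of the integral of 1/ϱb near 0
  set g : ℝ → ENNReal := fun r => ENNReal.ofReal ((ϱb r)⁻¹) with hg_def
  have hg_meas : Measurable g := (hϱbc.measurable.inv).ennreal_ofReal
  have hdiv' : (∫⁻ r in Set.Ioc (0:ℝ) 1, g r) = ⊤ := by
    rw [← hdiv]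
    apply setLIntegral_congr_fun measurableSet_Ioc
    intro r hr
    show ENNReal.ofReal ((ϱb r)⁻¹) = ENNReal.ofReal (1 / ϱ r)
    rw [hϱb_eq r hr.1.le, one_div]
  -- monotone convergence: truncated integrals of g near 0 are unbounded
  set εseq : ℕ → ℝ := fun n => c' / (n + 1) with hεseq_def
  have hεpos : ∀ n : ℕ, 0 < εseq n := fun n => div_pos hc'pos (by positivity)
  have hεle : ∀ n : ℕ, εseq n ≤ c' := fun n =>
    div_le_self hc'pos.le (by norm_num)
  set f : ℕ → ℝ → ENNReal := fun n => (Set.Ioc (εseq n) 1).indicator g with hf_def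
  have hf_meas : ∀ n, Measurable (f n) := fun n => hg_meas.indicator measurableSet_Ioc
  have hf_mono : Monotone f := by
    intro m n hmn
    apply Set.indicator_le_indicator_of_subset
    · refine Set.Ioc_subset_Ioc_left ?_
      show c' / ((n:ℝ) + 1) ≤ c' / ((m:ℝ) + 1)
      gcongr
    · exact fun r => zero_le
  have hf_sup : ∀ r, (⨆ n, f n r) = (Set.Ioc (0:ℝ) 1).indicator g r := by
    intro r
    by_cases hr : r ∈ Set.Ioc (0:ℝ) 1
    · rw [Set.indicator_of_mem hr]
      refine le_antisymm (iSup_le fun n => ?_) ?_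
      · exact Set.indicator_le_self _ _ r
      · obtain ⟨m, hm⟩ := exists_nat_gt (c' / r)
        have h1 : εseq m < r := by
          rw [hεseq_def]
          rw [div_lt_iff₀ (by positivity : (0:ℝ) < (m:ℝ) + 1)]
          have h2 : c' / r < (m:ℝ) + 1 := hm.trans (by linarith)
          rw [div_lt_iff₀ hr.1] at h2
          nlinarith [hr.1]
        have h3 : f m r = g r := by
          show (Set.Ioc (εseq m) 1).indicator g r = g r
          exact Set.indicator_of_mem (Set.mem_Ioc.mpr ⟨h1, hr.2⟩) g
        calc g r = f m r := h3.symm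
          _ ≤ ⨆ n, f n r := le_iSup (fun n => f n r) m
    · rw [Set.indicator_of_notMem hr]
      refine le_antisymm (iSup_le fun n => ?_) zero_le
      rw [hf_def]
      apply le_of_eq
      apply Set.indicator_of_notMem
      intro hmem
      exact hr ⟨(hεpos n).trans hmem.1, hmem.2⟩
  have hsup_top : (⨆ n, ∫⁻ r in Set.Ioc (εseq n) 1, g r) = ⊤ := by
    calc (⨆ n, ∫⁻ r in Set.Ioc (εseq n) 1, g r)
        = ⨆ n, ∫⁻ r, f n r := by
          refine iSup_congr fun n => ?_
          exact (lintegral_indicator measurableSet_Ioc g).symm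
      _ = ∫⁻ r, ⨆ n, f n r := (lintegral_iSup hf_meas hf_mono).symm
      _ = ∫⁻ r, (Set.Ioc (0:ℝ) 1).indicator g r := by
          congr 1
          funext r
          exact hf_sup r
      _ = ∫⁻ r in Set.Ioc (0:ℝ) 1, g r := lintegral_indicator measurableSet_Ioc g
      _ = ⊤ := hdiv'
  have hfin : ∀ n, (∫⁻ r in Set.Ioc (εseq n) 1, g r) ≠ ⊤ := by
    intro n
    have hb : ∀ r ∈ Set.Ioc (εseq n) 1, g r ≤ ENNReal.ofReal ((ϱb (εseq n))⁻¹) := by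
      intro r hr
      apply ENNReal.ofReal_le_ofReal
      exact inv_anti₀ (hϱb_pos _ (hεpos n)) (hϱb_mono hr.1.le)
    have hle : (∫⁻ r in Set.Ioc (εseq n) 1, g r)
        ≤ ENNReal.ofReal ((ϱb (εseq n))⁻¹) * volume (Set.Ioc (εseq n) 1) := by
      calc (∫⁻ r in Set.Ioc (εseq n) 1, g r)
          ≤ ∫⁻ _ in Set.Ioc (εseq n) 1, ENNReal.ofReal ((ϱb (εseq n))⁻¹) :=
            setLIntegral_mono measurable_const hb
        _ = ENNReal.ofReal ((ϱb (εseq n))⁻¹) * volume (Set.Ioc (εseq n) 1) :=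
            setLIntegral_const _ _
    exact (hle.trans_lt (ENNReal.mul_lt_top ENNReal.ofReal_lt_top measure_Ioc_lt_top)).ne
  obtain ⟨n, hn⟩ : ∃ n, ENNReal.ofReal (κ * T + K) < ∫⁻ r in Set.Ioc (εseq n) 1, g r := by
    by_contra h
    push_neg at h
    have h1 : (⨆ n, ∫⁻ r in Set.Ioc (εseq n) 1, g r) ≤ ENNReal.ofReal (κ * T + K) :=
      iSup_le h
    rw [hsup_top] at h1
    exact ENNReal.ofReal_lt_top.not_ge h1
  set ε : ℝ := εseq n with hε_def
  have hεpos' : 0 < ε := hεpos n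
  have hεc' : ε ≤ c' := hεle n
  have hε1 : ε ≤ 1 := hεc'.trans hc'le1
  have hne_top := hfin n
  -- real version of the lower bound on the integral
  have hreal : (∫ r in ε..(1:ℝ), (ϱb r)⁻¹) = (∫⁻ r in Set.Ioc ε 1, g r).toReal := by
    rw [intervalIntegral.integral_of_le hε1,
      MeasureTheory.integral_eq_lintegral_of_nonneg_ae
        (Filter.Eventually.of_forall fun r => inv_nonneg.2 (hϱb_nonneg r))
        ((hϱbc.measurable.inv).aestronglyMeasurable)]
  have hKTnn : 0 ≤ κ * T + K := by nlinarith
  have hbig : κ * T + K < ∫ r in ε..(1:ℝ), (ϱb r)⁻¹ := by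
    rw [hreal]
    exact (ENNReal.ofReal_lt_iff_lt_toReal hKTnn hne_top).mp hn
  have hsub1 : Set.uIcc ε c' ⊆ Set.Ici ε := by
    rw [Set.uIcc_of_le hεc']
    exact Set.Icc_subset_Ici_self
  have hint1 : IntervalIntegrable (fun r => (ϱb r)⁻¹) volume ε c' :=
    ((hinv_cont ε hεpos').mono hsub1).intervalIntegrable
  have hsub2 : Set.uIcc c' 1 ⊆ Set.Ici ε := by
    rw [Set.uIcc_of_le hc'le1]
    exact fun x hx => hεc'.trans hx.1
  have hint2 : IntervalIntegrable (fun r => (ϱb r)⁻¹) volume c' 1 :=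
    ((hinv_cont ε hεpos').mono hsub2).intervalIntegrable
  have hsplit : (∫ r in ε..c', (ϱb r)⁻¹) + K = ∫ r in ε..(1:ℝ), (ϱb r)⁻¹ :=
    integral_add_adjacent_intervals hint1 hint2
  have hmid : κ * T < ∫ r in ε..c', (ϱb r)⁻¹ := by linarith
  -- find t₀ with v t₀ = ε
  have hεc : ε ≤ c := hεc'.trans hc'lec
  obtain ⟨t₀, ht₀mem, ht₀⟩ := intermediate_value_Icc ht₁.1 hv_cont.continuousOn
    (show ε ∈ Set.Icc (v 0) (v t₁) from ⟨by rw [hv0]; exact hεpos'.le, hεc⟩)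
  -- the auxiliary function Φ
  set ψ : ℝ → ℝ := fun r => (ϱb (max r ε))⁻¹ with hψ_def
  have hψc : Continuous ψ := by
    apply Continuous.inv₀ (hϱbc.comp (continuous_id.max continuous_const))
    intro r
    exact (hϱb_pos _ (lt_of_lt_of_le hεpos' (le_max_right r ε))).ne'
  have hψ_nonneg : ∀ r, 0 ≤ ψ r := fun r => inv_nonneg.2 (hϱb_nonneg _)
  set Φ : ℝ → ℝ := fun x => ∫ r in ε..x, ψ r with hΦ_def
  have hΦ_deriv : ∀ x, HasDerivAt Φ (ψ x) x := fun x =>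
    (hψc.integral_hasStrictDerivAt ε x).hasDerivAt
  have hkey : ∀ t ∈ Set.Icc t₀ t₁,
      HasDerivWithinAt (Φ ∘ v) (ψ (v t) * (κ * ϱb (ub t))) (Set.Icc t₀ t₁) t :=
    fun t _ => ((hΦ_deriv (v t)).comp t (hv_deriv t)).hasDerivWithinAt
  have hbound : ∀ t ∈ Set.Icc t₀ t₁, ‖ψ (v t) * (κ * ϱb (ub t))‖ ≤ κ := by
    intro t ht
    have htT : t ∈ Set.Icc (0:ℝ) T := ⟨ht₀mem.1.trans ht.1, ht.2.trans ht₁.2⟩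
    have hvt : ε ≤ v t := ht₀ ▸ hv_mono ht.1
    have hvpos : 0 < ϱb (v t) := hϱb_pos _ (lt_of_lt_of_le hεpos' hvt)
    have hψvt : ψ (v t) = (ϱb (v t))⁻¹ := by
      show (ϱb (max (v t) ε))⁻¹ = (ϱb (v t))⁻¹
      rw [max_eq_left hvt]
    have hub' : ϱb (ub t) ≤ ϱb (v t) := by
      rw [hub_eq t htT]
      have h1 : u t ≤ v t := hineq' t htT
      calc ϱb (u t) = ϱ (u t) := hϱb_eq _ (hunn t htT)
        _ ≤ ϱ (v t) := hϱm (hunn t htT) ((hunn t htT).trans h1) h1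
        _ = ϱb (v t) := (hϱb_eq _ ((hunn t htT).trans h1)).symm
    have hubnn : 0 ≤ ϱb (ub t) := hϱb_nonneg _
    rw [Real.norm_eq_abs,
      abs_of_nonneg (mul_nonneg (hψ_nonneg _) (mul_nonneg hκ hubnn)), hψvt]
    calc (ϱb (v t))⁻¹ * (κ * ϱb (ub t))
        ≤ (ϱb (v t))⁻¹ * (κ * ϱb (v t)) := by
          apply mul_le_mul_of_nonneg_left _ (inv_nonneg.2 hvpos.le)
          exact mul_le_mul_of_nonneg_left hub' hκ
      _ = κ := by field_simp
  have hmvt := Convex.norm_image_sub_le_of_norm_hasDerivWithin_le hkey hbound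
    (convex_Icc t₀ t₁) (Set.left_mem_Icc.2 ht₀mem.2) (Set.right_mem_Icc.2 ht₀mem.2)
  have hΦε : Φ ε = 0 := by simp [hΦ_def]
  have habs : |t₁ - t₀| ≤ T := by
    rw [abs_of_nonneg (by linarith [ht₀mem.2])]
    linarith [ht₀mem.1, ht₁.2]
  have hupper : Φ (v t₁) ≤ κ * T := by
    have h2 : Φ (v t₁) - Φ (v t₀) ≤ κ * |t₁ - t₀| := by
      have h3 := hmvt
      rw [Real.norm_eq_abs, Real.norm_eq_abs] at h3
      exact (le_abs_self _).trans h3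
    rw [ht₀, hΦε] at h2
    nlinarith [mul_le_mul_of_nonneg_left habs hκ]
  -- lower bound for Φ (v t₁)
  have hsplit2 : (∫ r in ε..c', ψ r) + ∫ r in c'..c, ψ r = ∫ r in ε..c, ψ r :=
    integral_add_adjacent_intervals (hψc.intervalIntegrable ε c')
      (hψc.intervalIntegrable c' c)
  have hnn2 : 0 ≤ ∫ r in c'..c, ψ r :=
    intervalIntegral.integral_nonneg hc'lec fun r _ => hψ_nonneg r
  have hcongr : (∫ r in ε..c', ψ r) = ∫ r in ε..c', (ϱb r)⁻¹ := by
    apply intervalIntegral.integral_congr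
    intro r hr
    rw [Set.uIcc_of_le hεc'] at hr
    show (ϱb (max r ε))⁻¹ = (ϱb r)⁻¹
    rw [max_eq_left hr.1]
  have hΦc : Φ (v t₁) = ∫ r in ε..c, ψ r := by rw [hc_def]
  linarith
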